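/- Let Φ : A° × B → [0,∞] be a distance matrix between distance spaces A and B, i.e. d_A(u,x) + Φ(x,y) + d_B(y,v) ≥ Φ(u,v) for all u,x ∈ A, y,v ∈ B. Define Φ‡(y,x) = sup_{u∈A, v∈B} Φ(u,v) ⊸ (d_A(u,x) + d_B(y,v)). Then for all x, x' ∈ A: inf_{y ∈ B} (Φ(x,y) + Φ‡(y,x')) ≥ d_A(x,x'), and for all y, y' ∈ B: inf_{x ∈ A} (Φ‡(y,x) + Φ(x,y')) ≥ d_B(y,y'). -/

import Mathlib

open ENNReal

theorem stmt_17 {A B : Type*} (dA : A → A → ℝ≥0∞) (dB : B → B → ℝ≥0∞)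
    (hArefl : ∀ x, dA x x = 0)
    (hAtrans : ∀ x y z, dA x z ≤ dA x y + dA y z)
    (hBrefl : ∀ x, dB x x = 0)
    (hBtrans : ∀ x y z, dB x z ≤ dB x y + dB y z)
    (Φ : A → B → ℝ≥0∞)
    (hΦ : ∀ u x y v, Φ u v ≤ dA u x + Φ x y + dB y v) :
    (∀ x x' : A, dA x x' ≤ ⨅ y : B, Φ x y +
        ⨆ u : A, ⨆ v : B, (dA u x' + dB y v) - Φ u v) ∧
    (∀ y y' : B, dB y y' ≤ ⨅ x : A,
        (⨆ u : A, ⨆ v : B, (dA u x + dB y v) - Φ u v) + Φ x y') := by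
  constructor
  · intro x x'
    refine le_iInf fun y => ?_
    have h1 : dA x x' - Φ x y ≤ ⨆ u : A, ⨆ v : B, (dA u x' + dB y v) - Φ u v := by
      have := le_iSup₂_of_le (f := fun u v => (dA u x' + dB y v) - Φ u v) x y le_rfl
      simpa [hBrefl] using this
    calc dA x x' ≤ Φ x y + (dA x x' - Φ x y) := le_add_tsub
      _ ≤ _ := add_le_add_right h1 _
  · intro y y'
    refine le_iInf fun x => ?_
    have h1 : dB y y' - Φ x y' ≤ ⨆ u : A, ⨆ v : B, (dA u x + dB y v) - Φ u v := by
      have := le_iSup₂_of_le (f := fun u v => (dA u x + dB y v) - Φ u v) x y' le_rfl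
      simpa [hArefl] using this
    calc dB y y' ≤ (dB y y' - Φ x y') + Φ x y' := le_tsub_add
      _ ≤ _ := add_le_add_left h1 _
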